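/- Let G be a balanced bipartite graph with parts X, Y and S ⊆ X. Let C be a feasible cycle of length ≥ 6 that is a minimal system of G, and let x ∈ S \ V(C), y ∈ Y \ V(C). If the number of edges from {x, y} to C is at least |C|/2 + 1, then xy ∉ E(G), and G[V(C) ∪ {x,y}] contains a cycle C' and an edge from x to some vertex y_i of C, with the edge disjoint from C', such that |C'| = |C| and |S ∩ V(C')| = |S ∩ V(C)|. -/

import Mathlib

namespace ReroutingAux

open SimpleGraph Finset

variable {V : Type*} {G : SimpleGraph V} {n : ℕ}

def walkSeg (p : ZMod n → V) (hadj : ∀ t, G.Adj (p t) (p (t+1))) (s : ZMod n) :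
    (m : ℕ) → G.Walk (p s) (p (s + (m : ZMod n)))
  | 0 => SimpleGraph.Walk.nil.copy rfl (by simp)
  | (m+1) => (SimpleGraph.Walk.cons (hadj s) (walkSeg p hadj (s+1) m)).copy rfl
      (by push_cast; ring_nf)

lemma walkSeg_length (p : ZMod n → V) (hadj : ∀ t, G.Adj (p t) (p (t+1))) (s : ZMod n) :
    ∀ m : ℕ, (walkSeg p hadj s m).length = m := by
  intro m
  induction m generalizing s with
  | zero => simp [walkSeg]
  | succ m ih => simp [walkSeg, ih]

lemma walkSeg_support (p : ZMod n → V) (hadj : ∀ t, G.Adj (p t) (p (t+1))) (s : ZMod n) :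
    ∀ m : ℕ, (walkSeg p hadj s m).support = (List.range (m+1)).map (fun r : ℕ => p (s + r)) := by
  intro m
  induction m generalizing s with
  | zero => simp [walkSeg, List.range_succ]
  | succ m ih =>
    rw [walkSeg, SimpleGraph.Walk.support_copy, SimpleGraph.Walk.support_cons, ih (s+1)]
    rw [show List.range (m+1+1) = 0 :: (List.range (m+1)).map Nat.succ from
      List.range_succ_eq_map (n := m+1)]
    simp only [List.map_cons, List.map_map, Nat.cast_zero, add_zero]
    congr 1
    apply List.map_congr_left
    intro r _
    simp only [Function.comp_apply]
    congr 1
    push_cast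
    ring

lemma walkSeg_mem_support (p : ZMod n → V) (hadj : ∀ t, G.Adj (p t) (p (t+1)))
    (s : ZMod n) (m : ℕ) (w : V) :
    w ∈ (walkSeg p hadj s m).support ↔ ∃ r ≤ m, w = p (s + (r : ZMod n)) := by
  rw [walkSeg_support]
  simp only [List.mem_map, List.mem_range]
  constructor
  · rintro ⟨r, hr, rfl⟩; exact ⟨r, by omega, rfl⟩
  · rintro ⟨r, hr, rfl⟩; exact ⟨r, by omega, rfl⟩

lemma walkSeg_support_nodup (p : ZMod n → V) (hadj : ∀ t, G.Adj (p t) (p (t+1)))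
    (hp : Function.Injective p) (s : ZMod n) (m : ℕ) (hm : m < n) :
    (walkSeg p hadj s m).support.Nodup := by
  rw [walkSeg_support]
  refine List.Nodup.map_on ?_ List.nodup_range
  intro a ha b hb hab
  simp only [List.mem_range] at ha hb
  have := hp hab
  have h1 : (a : ZMod n) = (b : ZMod n) := by
    have := add_left_cancel this
    exact this
  have := congrArg ZMod.val h1
  rwa [ZMod.val_cast_of_lt (by omega), ZMod.val_cast_of_lt (by omega)] at this

lemma build1 [NeZero n] (p : ZMod n → V) (hadj : ∀ t, G.Adj (p t) (p (t+1)))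
    (hp : Function.Injective p)
    (z : V) (hz : ∀ r, z ≠ p r) (s t : ZMod n) (hst : s ≠ t)
    (h1 : G.Adj z (p s)) (h2 : G.Adj z (p t)) :
    ∃ D : G.Walk z z, D.IsCycle ∧ D.length = (t - s).val + 2 ∧
      ∀ w, w ∈ D.support ↔ (w = z ∨ ∃ r ≤ (t - s).val, w = p (s + (r : ZMod n))) := by
  have hend : s + (((t - s).val : ℕ) : ZMod n) = t := by
    rw [ZMod.natCast_zmod_val]; ring
  set m : ℕ := (t - s).val with hmdef
  let seg : G.Walk (p s) (p t) := (walkSeg p hadj s m).copy rfl (congrArg p hend)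
  have hsegsup : seg.support = (walkSeg p hadj s m).support := SimpleGraph.Walk.support_copy _ _ _
  have hsegmem : ∀ w, w ∈ seg.support ↔ ∃ r ≤ m, w = p (s + (r : ZMod n)) := by
    intro w; rw [hsegsup]; exact walkSeg_mem_support p hadj s m w
  have hznotseg : z ∉ seg.support := by
    rw [hsegmem]; rintro ⟨r, _, hw⟩; exact hz _ hw
  let Q : G.Walk (p s) z := seg.append (SimpleGraph.Walk.cons h2.symm SimpleGraph.Walk.nil)
  have hQsup : Q.support = seg.support ++ [z] := by
    simp [Q, SimpleGraph.Walk.support_append]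
  have hQpath : Q.IsPath := by
    rw [SimpleGraph.Walk.isPath_def, hQsup]
    rw [List.nodup_append]
    refine ⟨?_, List.nodup_singleton z, ?_⟩
    · rw [hsegsup]; exact walkSeg_support_nodup p hadj hp s m (ZMod.val_lt _)
    · intro a ha b hb
      rw [List.mem_singleton] at hb
      subst hb; intro hab; subst hab; exact hznotseg ha
  have hQedges : Q.edges = seg.edges ++ [s(p t, z)] := by
    simp [Q, SimpleGraph.Walk.edges_append]
  have hedge : s(z, p s) ∉ Q.edges := by
    rw [hQedges]
    intro hmem
    rcases List.mem_append.mp hmem with hmem | hmem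
    · exact hznotseg (SimpleGraph.Walk.fst_mem_support_of_mem_edges seg hmem)
    · simp only [List.mem_singleton, Sym2.eq_iff] at hmem
      rcases hmem with ⟨hz1, _⟩ | ⟨_, hps⟩
      · exact hz t hz1
      · exact hst (hp hps)
  refine ⟨SimpleGraph.Walk.cons h1 Q, ?_, ?_, ?_⟩
  · rw [SimpleGraph.Walk.cons_isCycle_iff]; exact ⟨hQpath, hedge⟩
  · simp only [SimpleGraph.Walk.length_cons, Q, SimpleGraph.Walk.length_append,
      SimpleGraph.Walk.length_cons, SimpleGraph.Walk.length_nil, SimpleGraph.Walk.length_copy,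
      seg, walkSeg_length]
  · intro w
    rw [SimpleGraph.Walk.support_cons, List.mem_cons, hQsup, List.mem_append,
      List.mem_singleton, hsegmem w]
    constructor
    · rintro (h | h | h)
      · exact Or.inl h
      · exact Or.inr h
      · exact Or.inl h
    · rintro (h | h)
      · exact Or.inl h
      · exact Or.inr (Or.inl h)

lemma build2 [NeZero n] (p : ZMod n → V) (hadj : ∀ t, G.Adj (p t) (p (t+1)))
    (hp : Function.Injective p)
    (x y : V) (hxnot : ∀ r, x ≠ p r) (hynot : ∀ r, y ≠ p r) (s t : ZMod n) (hst : s ≠ t)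
    (hxy : G.Adj x y) (h1 : G.Adj y (p s)) (h2 : G.Adj x (p t)) :
    ∃ D : G.Walk x x, D.IsCycle ∧ D.length = (t - s).val + 3 ∧
      ∀ w, w ∈ D.support ↔ (w = x ∨ w = y ∨ ∃ r ≤ (t - s).val, w = p (s + (r : ZMod n))) := by
  have hend : s + (((t - s).val : ℕ) : ZMod n) = t := by
    rw [ZMod.natCast_zmod_val]; ring
  set m : ℕ := (t - s).val with hmdef
  let seg : G.Walk (p s) (p t) := (walkSeg p hadj s m).copy rfl (congrArg p hend)
  have hsegsup : seg.support = (walkSeg p hadj s m).support := SimpleGraph.Walk.support_copy _ _ _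
  have hsegmem : ∀ w, w ∈ seg.support ↔ ∃ r ≤ m, w = p (s + (r : ZMod n)) := by
    intro w; rw [hsegsup]; exact walkSeg_mem_support p hadj s m w
  have hxnotseg : x ∉ seg.support := by
    rw [hsegmem]; rintro ⟨r, _, hw⟩; exact hxnot _ hw
  have hynotseg : y ∉ seg.support := by
    rw [hsegmem]; rintro ⟨r, _, hw⟩; exact hynot _ hw
  let Q : G.Walk y x :=
    SimpleGraph.Walk.cons h1 (seg.append (SimpleGraph.Walk.cons h2.symm SimpleGraph.Walk.nil))
  have hQsup : Q.support = y :: (seg.support ++ [x]) := by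
    simp [Q, SimpleGraph.Walk.support_append]
  have hQpath : Q.IsPath := by
    rw [SimpleGraph.Walk.isPath_def, hQsup]
    rw [List.nodup_cons, List.nodup_append]
    refine ⟨?_, ?_, List.nodup_singleton x, ?_⟩
    · rw [List.mem_append, List.mem_singleton]
      rintro (h | rfl)
      · exact hynotseg h
      · exact G.ne_of_adj hxy rfl
    · rw [hsegsup]; exact walkSeg_support_nodup p hadj hp s m (ZMod.val_lt _)
    · intro a ha b hb
      rw [List.mem_singleton] at hb
      subst hb; intro hab; subst hab; exact hxnotseg ha
  have hQedges : Q.edges = s(y, p s) :: (seg.edges ++ [s(p t, x)]) := by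
    simp [Q, SimpleGraph.Walk.edges_append]
  have hedge : s(x, y) ∉ Q.edges := by
    rw [hQedges]
    intro hmem
    rcases List.mem_cons.mp hmem with hmem | hmem
    · rw [Sym2.eq_iff] at hmem
      rcases hmem with ⟨rfl, _⟩ | ⟨hx1, _⟩
      · exact G.ne_of_adj hxy rfl
      · exact hxnot s hx1
    · rcases List.mem_append.mp hmem with hmem | hmem
      · exact hxnotseg (SimpleGraph.Walk.fst_mem_support_of_mem_edges seg hmem)
      · simp only [List.mem_singleton, Sym2.eq_iff] at hmem
        rcases hmem with ⟨hx1, _⟩ | ⟨_, hy1⟩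
        · exact hxnot t hx1
        · exact hynot t hy1
  refine ⟨SimpleGraph.Walk.cons hxy Q, ?_, ?_, ?_⟩
  · rw [SimpleGraph.Walk.cons_isCycle_iff]; exact ⟨hQpath, hedge⟩
  · simp only [SimpleGraph.Walk.length_cons, Q, SimpleGraph.Walk.length_append,
      SimpleGraph.Walk.length_cons, SimpleGraph.Walk.length_nil, SimpleGraph.Walk.length_copy,
      seg, walkSeg_length]
  · intro w
    rw [SimpleGraph.Walk.support_cons, List.mem_cons, hQsup, List.mem_cons, List.mem_append,
      List.mem_singleton, hsegmem w]
    constructor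
    · rintro (h | h | h | h)
      · exact Or.inl h
      · exact Or.inr (Or.inl h)
      · exact Or.inr (Or.inr h)
      · exact Or.inl h
    · rintro (h | h | h)
      · exact Or.inl h
      · exact Or.inr (Or.inl h)
      · exact Or.inr (Or.inr (Or.inl h))



lemma mod_parity {n : ℕ} (hn : Even n) (m : ℕ) : (m % n) % 2 = m % 2 := by
  obtain ⟨k, hk⟩ := hn
  have h1 := Nat.div_add_mod m n
  have h2 : n * (m / n) = 2 * (k * (m / n)) := by rw [hk]; ring
  omega

lemma val_add_parity {n : ℕ} [NeZero n] (hn : Even n) (a b : ZMod n) :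
    (a + b).val % 2 = (a.val + b.val) % 2 := by
  rw [ZMod.val_add]; exact mod_parity hn _

lemma val_natCast_parity {n : ℕ} [NeZero n] (hn : Even n) (r : ℕ) :
    ((r : ZMod n)).val % 2 = r % 2 := by
  rw [ZMod.val_natCast]; exact mod_parity hn r

/-- parity of a difference -/
lemma val_sub_parity {n : ℕ} [NeZero n] (hn : Even n) (a b : ZMod n) :
    (a - b).val % 2 = (a.val + b.val) % 2 := by
  have h : (a - b) + b = a := by ring
  have := val_add_parity hn (a - b) b
  rw [h] at this
  omega

lemma val_sub_add {n : ℕ} [NeZero n] (a b : ZMod n) (h : a ≠ b) :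
    (a - b).val + (b - a).val = n := by
  have h1 : (a - b) + (b - a) = 0 := by ring
  have h2 : ((a - b).val + (b - a).val) % n = 0 := by
    rw [← ZMod.val_add, h1, ZMod.val_zero]
  have h3 : n ∣ (a - b).val + (b - a).val := Nat.dvd_of_mod_eq_zero h2
  have h4 : (a - b).val < n := ZMod.val_lt _
  have h5 : (b - a).val < n := ZMod.val_lt _
  have h6 : (a - b).val ≠ 0 := by
    rw [ZMod.val_ne_zero]; exact sub_ne_zero_of_ne h
  have h7 : n ≤ (a - b).val + (b - a).val := Nat.le_of_dvd (by omega) h3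
  have h8 : n ∣ ((a - b).val + (b - a).val - n) := Nat.dvd_sub h3 dvd_rfl
  have h9 : (a - b).val + (b - a).val - n < n := by omega
  have := Nat.eq_zero_of_dvd_of_lt h8 h9
  omega

lemma natCast_inj_of_lt {n r r' : ℕ} [NeZero n] (hr : r < n) (hr' : r' < n)
    (h : (r : ZMod n) = (r' : ZMod n)) : r = r' := by
  have := congrArg ZMod.val h
  rwa [ZMod.val_cast_of_lt hr, ZMod.val_cast_of_lt hr'] at this

lemma add_natCast_inj {n : ℕ} [NeZero n] (u : ZMod n) {r r' : ℕ} (hr : r < n) (hr' : r' < n)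
    (h : u + (r : ZMod n) = u + (r' : ZMod n)) : r = r' := by
  exact natCast_inj_of_lt hr hr' (by exact add_left_cancel h)

lemma self_eq_add_natCast_val {n : ℕ} [NeZero n] (u j : ZMod n) :
    j = u + (((j - u).val : ℕ) : ZMod n) := by
  rw [ZMod.natCast_zmod_val]; ring

lemma arc_split {n : ℕ} [NeZero n] (u w j : ZMod n) (huw : u ≠ w) :
    (j - u).val ≤ (w - u).val ∨ ((j - w).val ≤ (u - w).val ∧ (j - w).val = (j - u).val - (w - u).val) := by
  set d := (w - u).val with hd
  set r := (j - u).val with hr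
  by_cases hle : r ≤ d
  · exact Or.inl hle
  · right
    have hdr : (j - w) = ((r - d : ℕ) : ZMod n) := by
      have h1 : j - w = (j - u) - (w - u) := by ring
      rw [h1, ← ZMod.natCast_zmod_val (j - u), ← ZMod.natCast_zmod_val (w - u), ← hr, ← hd]
      rw [← Nat.cast_sub (by omega)]
    have hlt : r - d < n := by
      have := ZMod.val_lt (j - u)
      omega
    have hval : (j - w).val = r - d := by rw [hdr, ZMod.val_cast_of_lt hlt]
    have huw' : (u - w).val = n - d := by
      have := val_sub_add u w huw
      omega
    constructor
    · rw [hval, huw']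
      have := ZMod.val_lt (j - u)
      omega
    · omega

lemma cyc3 {n : ℕ} [NeZero n] (a b c : ZMod n) (hab : a ≠ b) (hbc : b ≠ c) (hca : c ≠ a) :
    (b - a).val + (c - b).val + (a - c).val = n ∨
      (b - a).val + (c - b).val + (a - c).val = 2 * n := by
  set v1 := (b - a).val
  set v2 := (c - b).val
  set v3 := (a - c).val
  have h0 : ((v1 + v2 + v3 : ℕ) : ZMod n) = 0 := by
    push_cast
    rw [ZMod.natCast_zmod_val, ZMod.natCast_zmod_val, ZMod.natCast_zmod_val]
    ring
  have hdvd : n ∣ v1 + v2 + v3 := (ZMod.natCast_eq_zero_iff _ _).mp h0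
  have h1 : v1 ≠ 0 := by rw [ZMod.val_ne_zero]; exact sub_ne_zero_of_ne hab.symm
  have h2 : v2 ≠ 0 := by rw [ZMod.val_ne_zero]; exact sub_ne_zero_of_ne hbc.symm
  have h3 : v3 ≠ 0 := by rw [ZMod.val_ne_zero]; exact sub_ne_zero_of_ne hca.symm
  have l1 : v1 < n := ZMod.val_lt _
  have l2 : v2 < n := ZMod.val_lt _
  have l3 : v3 < n := ZMod.val_lt _
  obtain ⟨k, hk⟩ := hdvd
  have hk3 : k < 3 := by
    by_contra hge
    have : n * 3 ≤ n * k := Nat.mul_le_mul_left n (by omega)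
    omega
  interval_cases k <;> omega

lemma card_range_filter_even : ∀ n : ℕ, ((Finset.range n).filter (fun m => Even m)).card = (n+1)/2 := by
  intro n
  induction n with
  | zero => simp
  | succ n ih =>
    rw [Finset.range_add_one, Finset.filter_insert]
    by_cases h : Even n
    · rw [if_pos h, Finset.card_insert_of_notMem (by simp), ih]
      obtain ⟨k, hk⟩ := h
      omega
    · rw [if_neg h, ih]
      have : n % 2 = 1 := by
        rw [Nat.even_iff] at h; omega
      omega

lemma card_evens (n : ℕ) [NeZero n] :
    (Finset.univ.filter (fun t : ZMod n => t.val % 2 = 0)).card = (n+1)/2 := by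
  have himg : (Finset.univ.filter (fun t : ZMod n => t.val % 2 = 0)).image ZMod.val
      = (Finset.range n).filter (fun m => Even m) := by
    ext m
    simp only [Finset.mem_image, Finset.mem_filter, Finset.mem_univ, true_and, Finset.mem_range]
    constructor
    · rintro ⟨t, ht, rfl⟩
      exact ⟨ZMod.val_lt t, Nat.even_iff.mpr ht⟩
    · rintro ⟨hm, hev⟩
      exact ⟨(m : ZMod n), by rw [ZMod.val_cast_of_lt hm]; exact Nat.even_iff.mp hev, ZMod.val_cast_of_lt hm⟩
  have hinj := Finset.card_image_of_injective
    (Finset.univ.filter (fun t : ZMod n => t.val % 2 = 0)) (ZMod.val_injective n)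
  rw [himg] at hinj
  rw [← hinj, card_range_filter_even]

lemma card_odds (n : ℕ) [NeZero n] :
    (Finset.univ.filter (fun t : ZMod n => t.val % 2 = 1)).card = n - (n+1)/2 := by
  classical
  have h1 := Finset.card_filter_add_card_filter_not
    (s := (Finset.univ : Finset (ZMod n))) (p := fun t => t.val % 2 = 0)
  have h2 : (Finset.univ : Finset (ZMod n)).card = n := by
    rw [Finset.card_univ, ZMod.card]
  have h3 := card_evens n
  have h4 : (Finset.univ.filter (fun t : ZMod n => ¬ t.val % 2 = 0))
      = Finset.univ.filter (fun t : ZMod n => t.val % 2 = 1) := by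
    refine Finset.filter_congr ?_
    intro t _
    constructor
    · intro h; omega
    · intro h; omega
  rw [h4] at h1
  omega

lemma val_add_ofNat_parity {n : ℕ} [NeZero n] (hne : Even n) (u : ZMod n) (r : ℕ) :
    (u + (r : ZMod n)).val % 2 = (u.val + r) % 2 := by
  have h1 := val_add_parity hne u (r : ZMod n)
  have h2 := val_natCast_parity hne (n := n) r
  omega

lemma sub_eq_add_natCast {n : ℕ} [NeZero n] (u : ZMod n) (r : ℕ) (hr : r ≤ n) :
    u - (r : ZMod n) = u + ((n - r : ℕ) : ZMod n) := by
  rw [Nat.cast_sub hr, ZMod.natCast_self]; ring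

lemma stepA {n : ℕ} [NeZero n] (hn6 : 6 ≤ n) (hne : Even n)
    (Nx SS : Finset (ZMod n)) (hSS1 : SS.Nonempty)
    (hNxodd : ∀ t ∈ Nx, t.val % 2 = 1) (hSSeven : ∀ t ∈ SS, t.val % 2 = 0)
    (KX : ∀ u ∈ Nx, ∀ w ∈ Nx, u ≠ w → (w - u).val + 2 < n →
      ∀ r ≤ (w - u).val, u + (r : ZMod n) ∉ SS) :
    ∀ u ∈ Nx, ∀ w ∈ Nx, u ≠ w → (w - u).val = 2 ∨ (w - u).val = n - 2 := by
  intro u hu w hw huw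
  by_contra hcon
  push_neg at hcon
  obtain ⟨hd2, hdn2⟩ := hcon
  set d := (w - u).val with hd
  have hdpar : d % 2 = 0 := by
    have h1 := val_sub_parity hne w u
    have hu1 := hNxodd u hu
    have hw1 := hNxodd w hw
    omega
  have hdne : d ≠ 0 := by
    rw [hd, ZMod.val_ne_zero]; exact sub_ne_zero_of_ne (Ne.symm huw)
  have hdlt : d < n := ZMod.val_lt _
  obtain ⟨k, hk⟩ := hne
  have hd4 : 4 ≤ d ∧ d ≤ n - 4 := by omega
  obtain ⟨j, hj⟩ := hSS1
  rcases arc_split u w j huw with hle | ⟨hle, _⟩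
  · have := KX u hu w hw huw (by omega) ((j - u).val) hle
    rw [← self_eq_add_natCast_val] at this
    exact this hj
  · have huwv : (u - w).val = n - d := by
      have := val_sub_add u w huw
      omega
    have := KX w hw u hu (Ne.symm huw) (by rw [huwv]; omega) ((j - w).val) hle
    rw [← self_eq_add_natCast_val] at this
    exact this hj

lemma NxTwo {n : ℕ} [NeZero n] (hn8 : 8 ≤ n)
    (Nx : Finset (ZMod n))
    (hstep : ∀ u ∈ Nx, ∀ w ∈ Nx, u ≠ w → (w - u).val = 2 ∨ (w - u).val = n - 2) :
    Nx.card ≤ 2 := by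
  by_contra h
  rw [not_le] at h
  obtain ⟨a, b, c, ha, hb, hc, hab, hac, hbc⟩ := Finset.two_lt_card_iff.mp h
  rcases cyc3 a b c hab hbc (Ne.symm hac) with hsum | hsum <;>
    rcases hstep a ha b hb hab with h1 | h1 <;>
    rcases hstep b hb c hc hbc with h2 | h2 <;>
    rcases hstep c hc a ha hac.symm with h3 | h3 <;> omega

lemma pairNx {n : ℕ} [NeZero n] (hn6 : 6 ≤ n)
    (Nx : Finset (ZMod n)) {a b : ZMod n} (ha : a ∈ Nx) (hb : b ∈ Nx) (hab : a ≠ b)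
    (hstep : ∀ u ∈ Nx, ∀ w ∈ Nx, u ≠ w → (w - u).val = 2 ∨ (w - u).val = n - 2) :
    ∃ w, w ∈ Nx ∧ w + ((2 : ℕ) : ZMod n) ∈ Nx := by
  rcases hstep a ha b hb hab with h | h
  · refine ⟨a, ha, ?_⟩
    have hb' : b = a + ((2 : ℕ) : ZMod n) := by
      rw [show ((2:ℕ) : ZMod n) = (((b - a).val : ℕ) : ZMod n) from by rw [h]]
      exact self_eq_add_natCast_val a b
    rwa [← hb']
  · refine ⟨b, hb, ?_⟩
    have hav : (a - b).val = 2 := by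
      have := val_sub_add a b hab
      have := ZMod.val_lt (b - a)
      omega
    have ha' : a = b + ((2 : ℕ) : ZMod n) := by
      rw [show ((2:ℕ) : ZMod n) = (((a - b).val : ℕ) : ZMod n) from by rw [hav]]
      exact self_eq_add_natCast_val b a
    rwa [← ha']

section Core

variable {n : ℕ} [NeZero n]

lemma evens_zmod6 (w : ZMod 6) (hw : w.val % 2 = 1) (t : ZMod 6) (ht : t.val % 2 = 0) :
    t = w + ((1:ℕ) : ZMod 6) ∨ t = w + ((3:ℕ) : ZMod 6) ∨ t = w + ((5:ℕ) : ZMod 6) := by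
  have h1 : (t - w).val % 2 = 1 := by
    have := val_sub_parity (n := 6) (by decide) t w
    omega
  have h2 : (t - w).val < 6 := ZMod.val_lt _
  have h3 := self_eq_add_natCast_val w t
  have : (t - w).val = 1 ∨ (t - w).val = 3 ∨ (t - w).val = 5 := by omega
  rcases this with h | h | h <;> rw [h] at h3
  · exact Or.inl h3
  · exact Or.inr (Or.inl h3)
  · exact Or.inr (Or.inr h3)

lemma part2core (hn6 : 6 ≤ n) (hne : Even n)
    (Nx Ny SS : Finset (ZMod n))
    (hNxodd : ∀ t ∈ Nx, t.val % 2 = 1) (hNyeven : ∀ t ∈ Ny, t.val % 2 = 0)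
    (hSSeven : ∀ t ∈ SS, t.val % 2 = 0)
    (hcard : n / 2 + 1 ≤ Nx.card + Ny.card) (hSS2 : 2 ≤ SS.card)
    (KX : ∀ u ∈ Nx, ∀ w ∈ Nx, u ≠ w → (w - u).val + 2 < n →
      ∀ r ≤ (w - u).val, u + (r : ZMod n) ∉ SS)
    (KY : ∀ s ∈ Ny, ∀ t ∈ Ny, s ≠ t → (t - s).val + 2 < n →
      ∀ r ≤ (t - s).val, ∀ r' ≤ (t - s).val, r ≠ r' →
        ¬(s + (r : ZMod n) ∈ SS ∧ s + (r' : ZMod n) ∈ SS)) :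
    ∃ u ∈ Nx, u - 1 ∈ Ny ∧ u + 1 ∈ Ny := by
  by_contra hng
  push_neg at hng
  obtain ⟨k, hk⟩ := hne
  have hne' : Even n := ⟨k, hk⟩
  set E := Finset.univ.filter (fun t : ZMod n => t.val % 2 = 0) with hE
  have hmemE : ∀ t : ZMod n, t ∈ E ↔ t.val % 2 = 0 := by
    intro t; simp [hE]
  have hEcard : E.card = n / 2 := by
    rw [hE, card_evens]; omega
  have hNyE : Ny ⊆ E := fun t ht => (hmemE t).mpr (hNyeven t ht)
  have hSSE : SS ⊆ E := fun t ht => (hmemE t).mpr (hSSeven t ht)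
  have hNycard : Ny.card ≤ n / 2 := hEcard ▸ Finset.card_le_card hNyE
  have hNxne : Nx.Nonempty := Finset.card_pos.mp (show 0 < Nx.card by omega)
  obtain ⟨u0, hu0⟩ := hNxne
  have hSSne : SS.Nonempty := Finset.card_pos.mp (show 0 < SS.card by omega)
  have hstep := stepA hn6 hne' Nx SS hSSne hNxodd hSSeven KX
  -- parity of u + r for u ∈ Nx
  have hparx : ∀ u ∈ Nx, ∀ r : ℕ, r % 2 = 1 → (u + (r : ZMod n)).val % 2 = 0 := by
    intro u hu r hr
    rw [val_add_ofNat_parity hne']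
    have := hNxodd u hu
    omega
  by_cases hNyall : E ⊆ Ny
  · have h1 : u0 - 1 ∈ Ny := by
      rw [← Nat.cast_one, sub_eq_add_natCast u0 1 (by omega)]
      exact hNyall ((hmemE _).mpr (hparx u0 hu0 (n - 1) (by omega)))
    have h2 : u0 + 1 ∈ Ny := by
      rw [← Nat.cast_one]
      exact hNyall ((hmemE _).mpr (hparx u0 hu0 1 (by omega)))
    exact hng u0 hu0 h1 h2
  · obtain ⟨m0, hm0E, hm0Ny⟩ : ∃ m0, m0 ∈ E ∧ m0 ∉ Ny := by
      by_contra hno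
      push_neg at hno
      exact hNyall hno
    have hNycard' : Ny.card ≤ n / 2 - 1 := by
      have hsub : Ny ⊆ E.erase m0 :=
        fun t ht => Finset.mem_erase.mpr ⟨fun h => hm0Ny (h ▸ ht), hNyE ht⟩
      have := Finset.card_le_card hsub
      rw [Finset.card_erase_of_mem hm0E] at this
      omega
    have hNx2 : 2 ≤ Nx.card := by omega
    obtain ⟨a, ha, b, hb, hab⟩ := Finset.one_lt_card.mp (show 1 < Nx.card by omega)
    obtain ⟨w, hw, hw2⟩ := pairNx hn6 Nx ha hb hab hstep
    have hwodd := hNxodd w hw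
    have hcastinj : ∀ r r' : ℕ, r < n → r' < n → w + (r : ZMod n) = w + (r' : ZMod n) → r = r' :=
      fun r r' hr hr' h => add_natCast_inj w hr hr' h
    have hdiffval : ∀ r r' : ℕ, r' ≤ r →
        (w + (r : ZMod n)) - (w + (r' : ZMod n)) = ((r - r' : ℕ) : ZMod n) := by
      intro r r' hrr
      rw [Nat.cast_sub hrr]; ring
    have hval2 : ((w + ((2:ℕ) : ZMod n)) - w).val = 2 := by
      rw [show (w + ((2:ℕ) : ZMod n)) - w = ((2:ℕ) : ZMod n) from by ring,
        ZMod.val_cast_of_lt (by omega)]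
    have hwne : w ≠ w + ((2:ℕ) : ZMod n) := by
      intro h
      have h2 : ((2:ℕ) : ZMod n) = 0 := by
        have := congrArg (fun z => z - w) h
        simpa using this.symm
      have := congrArg ZMod.val h2
      rw [ZMod.val_cast_of_lt (show 2 < n by omega), ZMod.val_zero] at this
      omega
    have hkill1 : w + ((1:ℕ) : ZMod n) ∉ SS :=
      KX w hw _ hw2 hwne (by rw [hval2]; omega) 1 (by omega)
    by_cases hn8 : 8 ≤ n
    · -- big case
      have hNxle2 : Nx.card ≤ 2 := NxTwo hn8 Nx hstep
      have hsd : ∀ j, j ∈ E → j ∉ Ny → j = m0 := by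
        intro j hjE hjN
        by_contra hjm
        have hsub : Ny ⊆ (E.erase m0).erase j := by
          intro t ht
          refine Finset.mem_erase.mpr ⟨fun h => hjN (h ▸ ht), Finset.mem_erase.mpr
            ⟨fun h => hm0Ny (h ▸ ht), hNyE ht⟩⟩
        have hc := Finset.card_le_card hsub
        rw [Finset.card_erase_of_mem (Finset.mem_erase.mpr ⟨hjm, hjE⟩),
          Finset.card_erase_of_mem hm0E] at hc
        omega
      -- m0 = w + 1
      have hwm1 : w - 1 = w + ((n-1 : ℕ) : ZMod n) := by
        rw [← Nat.cast_one, sub_eq_add_natCast w 1 (by omega)]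
      have hw2m1 : (w + ((2:ℕ) : ZMod n)) - 1 = w + ((1:ℕ) : ZMod n) := by
        push_cast; ring
      have hw2p1 : (w + ((2:ℕ) : ZMod n)) + 1 = w + ((3:ℕ) : ZMod n) := by
        push_cast; ring
      have hm0w1 : m0 = w + ((1:ℕ) : ZMod n) := by
        by_contra hm0w
        have h1 : w + ((1:ℕ) : ZMod n) ∈ Ny := by
          by_contra hh
          exact hm0w (hsd _ ((hmemE _).mpr (hparx w hw 1 (by omega))) hh).symm
        -- ¬good w: w+1 ∈ Ny so w-1 ∉ Ny
        have h2 : w - 1 ∉ Ny := by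
          intro hh
          exact hng w hw hh (by rw [← Nat.cast_one] at h1 ⊢; exact h1)
        rw [hwm1] at h2
        have hmm := hsd _ ((hmemE _).mpr (hparx w hw (n-1) (by omega))) h2
        -- ¬good (w+2): (w+2)-1 = w+1 ∈ Ny so (w+2)+1 = w+3 ∉ Ny
        have h3 : w + ((3:ℕ) : ZMod n) ∉ Ny := by
          intro hh
          exact hng _ hw2 (by rw [hw2m1]; exact h1) (by rw [hw2p1]; exact hh)
        have hmm2 := hsd _ ((hmemE _).mpr (hparx w hw 3 (by omega))) h3
        rw [← hmm2] at hmm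
        have := hcastinj _ _ (by omega) (by omega) hmm
        omega
      -- Ny contains w + (n-1) and w + 3
      have h3Ny : w + ((3:ℕ) : ZMod n) ∈ Ny := by
        by_contra hh
        have := hsd _ ((hmemE _).mpr (hparx w hw 3 (by omega))) hh
        rw [hm0w1] at this
        have := hcastinj _ _ (by omega) (by omega) this
        omega
      have hm1Ny : w + ((n-1 : ℕ) : ZMod n) ∈ Ny := by
        by_contra hh
        have := hsd _ ((hmemE _).mpr (hparx w hw (n-1) (by omega))) hh
        rw [hm0w1] at this
        have := hcastinj _ _ (by omega) (by omega) this
        omega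
      -- KY with s = w+3, t = w+(n-1)
      have hts : (w + ((n-1 : ℕ) : ZMod n)) - (w + ((3:ℕ) : ZMod n)) = ((n-4 : ℕ) : ZMod n) := by
        have : (n - 1 : ℕ) = (n - 4) + 3 := by omega
        rw [this, Nat.cast_add]
        ring
      have htsval : ((w + ((n-1 : ℕ) : ZMod n)) - (w + ((3:ℕ) : ZMod n))).val = n - 4 := by
        rw [hts, ZMod.val_cast_of_lt (by omega)]
      have hstne : w + ((3:ℕ) : ZMod n) ≠ w + ((n-1 : ℕ) : ZMod n) := by
        intro h
        have := hcastinj _ _ (by omega) (by omega) h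
        omega
      obtain ⟨s1, hs1, s2, hs2, hs12⟩ := Finset.one_lt_card.mp (show 1 < SS.card by omega)
      -- r_i
      have hgen : ∀ s', s' ∈ SS → (s' - (w + ((3:ℕ) : ZMod n))).val ≤ n - 4 := by
        intro s' hs'
        set r := (s' - (w + ((3:ℕ) : ZMod n))).val with hr
        have hrlt : r < n := ZMod.val_lt _
        have hrpar : r % 2 = 0 := by
          have h1 := val_sub_parity hne' s' (w + ((3:ℕ) : ZMod n))
          have h2 := hSSeven s' hs'
          have h3 := hparx w hw 3 (by omega)
          omega
        have hrne : r ≠ n - 2 := by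
          intro hh
          have hself := self_eq_add_natCast_val (w + ((3:ℕ) : ZMod n)) s'
          rw [← hr, hh] at hself
          have : s' = w + ((1:ℕ) : ZMod n) := by
            rw [hself]
            have h4 : ((3:ℕ) : ZMod n) + ((n-2 : ℕ) : ZMod n) = ((1:ℕ) : ZMod n) := by
              rw [← Nat.cast_add]
              have : 3 + (n - 2) = n + 1 := by omega
              rw [this, Nat.cast_add, ZMod.natCast_self, zero_add]
            rw [add_assoc, h4]
          rw [this] at hs'
          exact hkill1 hs'
        omega
      have hr1 := hgen s1 hs1
      have hr2 := hgen s2 hs2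
      have hr12 : (s1 - (w + ((3:ℕ) : ZMod n))).val ≠ (s2 - (w + ((3:ℕ) : ZMod n))).val := by
        intro hh
        apply hs12
        have e1 := self_eq_add_natCast_val (w + ((3:ℕ) : ZMod n)) s1
        have e2 := self_eq_add_natCast_val (w + ((3:ℕ) : ZMod n)) s2
        rw [e1, e2, hh]
      refine KY _ h3Ny _ hm1Ny hstne (by rw [htsval]; omega) _ (by rw [htsval]; exact hr1)
        _ (by rw [htsval]; exact hr2) hr12 ⟨?_, ?_⟩
      · rw [← self_eq_add_natCast_val]; exact hs1
      · rw [← self_eq_add_natCast_val]; exact hs2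
    · -- n = 6
      have hn6' : n = 6 := by omega
      subst hn6'
      have hE6 := evens_zmod6 w hwodd
      have hSS6 : ∀ t ∈ SS, t = w + ((3:ℕ) : ZMod 6) ∨ t = w + ((5:ℕ) : ZMod 6) := by
        intro t ht
        rcases hE6 t (hSSeven t ht) with h | h | h
        · exact absurd (h ▸ ht) hkill1
        · exact Or.inl h
        · exact Or.inr h
      have hval26 : ((2:ℕ) : ZMod 6).val = 2 := by decide
      by_cases hNx3 : 3 ≤ Nx.card
      · -- Nx = all odds
        have hOcard : (Finset.univ.filter (fun t : ZMod 6 => t.val % 2 = 1)).card = 3 := by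
          rw [card_odds 6]
        have hNxO : Nx ⊆ Finset.univ.filter (fun t : ZMod 6 => t.val % 2 = 1) :=
          fun t ht => Finset.mem_filter.mpr ⟨Finset.mem_univ t, hNxodd t ht⟩
        have hNxeq : Nx = Finset.univ.filter (fun t : ZMod 6 => t.val % 2 = 1) :=
          Finset.eq_of_subset_of_card_le hNxO (by omega)
        have hw4 : w + ((4:ℕ) : ZMod 6) ∈ Nx := by
          rw [hNxeq]
          refine Finset.mem_filter.mpr ⟨Finset.mem_univ _, ?_⟩
          rw [val_add_ofNat_parity hne']
          omega
        -- kill w+3 via (w+2, w+4)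
        have hd42 : ((w + ((4:ℕ) : ZMod 6)) - (w + ((2:ℕ) : ZMod 6))).val = 2 := by
          rw [hdiffval 4 2 (by omega)]
          exact hval26
        have hne24 : w + ((2:ℕ) : ZMod 6) ≠ w + ((4:ℕ) : ZMod 6) := by
          intro h; have := hcastinj 2 4 (by omega) (by omega) h; omega
        have hk3 := KX _ hw2 _ hw4 hne24 (by rw [hd42]; omega) 1 (by rw [hd42]; omega)
        rw [show (w + ((2:ℕ) : ZMod 6)) + ((1:ℕ) : ZMod 6) = w + ((3:ℕ) : ZMod 6) from by
          push_cast; ring] at hk3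
        -- kill w+5 via (w+4, w)
        have hd40 : (w - (w + ((4:ℕ) : ZMod 6))).val = 2 := by
          have : w - (w + ((4:ℕ) : ZMod 6)) = ((2:ℕ) : ZMod 6) := by
            have hc : ((2:ℕ) : ZMod 6) = -((4:ℕ) : ZMod 6) := by decide
            rw [hc]; ring
          rw [this]; exact hval26
        have hne40 : w + ((4:ℕ) : ZMod 6) ≠ w := by
          intro h
          have h' : w + ((4:ℕ) : ZMod 6) = w + ((0:ℕ) : ZMod 6) := by
            rw [h]; simp
          have := hcastinj 4 0 (by omega) (by omega) h'
          omega
        have hk5 := KX _ hw4 _ hw hne40 (by rw [hd40]; omega) 1 (by rw [hd40]; omega)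
        rw [show (w + ((4:ℕ) : ZMod 6)) + ((1:ℕ) : ZMod 6) = w + ((5:ℕ) : ZMod 6) from by
          push_cast; ring] at hk5
        obtain ⟨t0, ht0⟩ := hSSne
        rcases hSS6 t0 ht0 with h | h
        · exact hk3 (h ▸ ht0)
        · exact hk5 (h ▸ ht0)
      · -- Nx.card = 2, Ny.card = 2
        have hNy2 : 2 ≤ Ny.card := by omega
        have hw2m1' : (w + ((2:ℕ) : ZMod 6)) - 1 = w + ((1:ℕ) : ZMod 6) := by push_cast; ring
        have hw2p1' : (w + ((2:ℕ) : ZMod 6)) + 1 = w + ((3:ℕ) : ZMod 6) := by push_cast; ring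
        have hwm1eq : w - 1 = w + ((5:ℕ) : ZMod 6) := by
          have h5 : ((5:ℕ) : ZMod 6) = -1 := by decide
          rw [h5]; ring
        by_cases hy1 : w + ((1:ℕ) : ZMod 6) ∈ Ny
        · have hA : w + ((5:ℕ) : ZMod 6) ∉ Ny := by
            rw [← hwm1eq]
            intro hh
            exact hng w hw hh (by rw [← Nat.cast_one]; exact hy1)
          have hB : w + ((3:ℕ) : ZMod 6) ∉ Ny := by
            intro hh
            exact hng _ hw2 (by rw [hw2m1']; exact hy1) (by rw [hw2p1']; exact hh)
          have hsub : Ny ⊆ {w + ((1:ℕ) : ZMod 6)} := by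
            intro t ht
            rcases hE6 t (hNyeven t ht) with h | h | h
            · exact Finset.mem_singleton.mpr h
            · exact absurd (h ▸ ht) hB
            · exact absurd (h ▸ ht) hA
          have := Finset.card_le_card hsub
          rw [Finset.card_singleton] at this
          omega
        · have hsub : Ny ⊆ {w + ((3:ℕ) : ZMod 6), w + ((5:ℕ) : ZMod 6)} := by
            intro t ht
            rcases hE6 t (hNyeven t ht) with h | h | h
            · exact absurd (h ▸ ht) hy1
            · simp [h]
            · simp [h]
          have hNyeq : Ny = {w + ((3:ℕ) : ZMod 6), w + ((5:ℕ) : ZMod 6)} := by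
            refine Finset.eq_of_subset_of_card_le hsub ?_
            have := Finset.card_insert_le (w + ((3:ℕ) : ZMod 6)) ({w + ((5:ℕ) : ZMod 6)} : Finset (ZMod 6))
            rw [Finset.card_singleton] at this
            omega
          have h3 : w + ((3:ℕ) : ZMod 6) ∈ Ny := by rw [hNyeq]; simp
          have h5 : w + ((5:ℕ) : ZMod 6) ∈ Ny := by rw [hNyeq]; simp
          have hSSsub : SS ⊆ {w + ((3:ℕ) : ZMod 6), w + ((5:ℕ) : ZMod 6)} := by
            intro t ht
            rcases hSS6 t ht with h | h <;> simp [h]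
          have hSSeq : SS = {w + ((3:ℕ) : ZMod 6), w + ((5:ℕ) : ZMod 6)} := by
            refine Finset.eq_of_subset_of_card_le hSSsub ?_
            have := Finset.card_insert_le (w + ((3:ℕ) : ZMod 6)) ({w + ((5:ℕ) : ZMod 6)} : Finset (ZMod 6))
            rw [Finset.card_singleton] at this
            omega
          have hd35 : ((w + ((5:ℕ) : ZMod 6)) - (w + ((3:ℕ) : ZMod 6))).val = 2 := by
            rw [hdiffval 5 3 (by omega)]
            exact hval26
          have hne35 : w + ((3:ℕ) : ZMod 6) ≠ w + ((5:ℕ) : ZMod 6) := by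
            intro h; have := hcastinj 3 5 (by omega) (by omega) h; omega
          refine KY _ h3 _ h5 hne35 (by rw [hd35]; omega) 0 (by omega) 2 (by rw [hd35])
            (by omega) ⟨?_, ?_⟩
          · rw [show (w + ((3:ℕ) : ZMod 6)) + ((0:ℕ) : ZMod 6) = w + ((3:ℕ) : ZMod 6) from by
              push_cast; ring, hSSeq]
            simp
          · rw [show (w + ((3:ℕ) : ZMod 6)) + ((2:ℕ) : ZMod 6) = w + ((5:ℕ) : ZMod 6) from by
              push_cast; ring, hSSeq]
            simp

lemma part1core (hn6 : 6 ≤ n) (hne : Even n)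
    (Nx Ny SS : Finset (ZMod n))
    (hNxodd : ∀ t ∈ Nx, t.val % 2 = 1) (hNyeven : ∀ t ∈ Ny, t.val % 2 = 0)
    (hSSeven : ∀ t ∈ SS, t.val % 2 = 0)
    (hcard : n / 2 + 1 ≤ Nx.card + Ny.card) (hSS2 : 2 ≤ SS.card)
    (KX : ∀ u ∈ Nx, ∀ w ∈ Nx, u ≠ w → (w - u).val + 2 < n →
      ∀ r ≤ (w - u).val, u + (r : ZMod n) ∉ SS)
    (KXY1 : ∀ u ∈ Nx, ∀ j ∈ Ny, (u - j).val + 3 < n →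
      ∀ r ≤ (u - j).val, j + (r : ZMod n) ∉ SS)
    (KXY2 : ∀ u ∈ Nx, ∀ j ∈ Ny, (j - u).val + 3 < n →
      ∀ r ≤ (j - u).val, u + (r : ZMod n) ∉ SS) :
    False := by
  obtain ⟨k, hk⟩ := hne
  have hne' : Even n := ⟨k, hk⟩
  set E := Finset.univ.filter (fun t : ZMod n => t.val % 2 = 0) with hE
  have hmemE : ∀ t : ZMod n, t ∈ E ↔ t.val % 2 = 0 := by
    intro t; simp [hE]
  have hEcard : E.card = n / 2 := by
    rw [hE, card_evens]; omega
  have hNyE : Ny ⊆ E := fun t ht => (hmemE t).mpr (hNyeven t ht)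
  have hSSE : SS ⊆ E := fun t ht => (hmemE t).mpr (hSSeven t ht)
  have hNycard : Ny.card ≤ n / 2 := hEcard ▸ Finset.card_le_card hNyE
  have hNxne : Nx.Nonempty := Finset.card_pos.mp (show 0 < Nx.card by omega)
  obtain ⟨u0, hu0⟩ := hNxne
  have hSSne : SS.Nonempty := Finset.card_pos.mp (show 0 < SS.card by omega)
  have hstep := stepA hn6 hne' Nx SS hSSne hNxodd hSSeven KX
  have hparx : ∀ u ∈ Nx, ∀ r : ℕ, r % 2 = 1 → (u + (r : ZMod n)).val % 2 = 0 := by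
    intro u hu r hr
    rw [val_add_ofNat_parity hne']
    have := hNxodd u hu
    omega
  -- parity of e = (j - u).val for u ∈ Nx, j ∈ Ny
  have heodd : ∀ u ∈ Nx, ∀ j ∈ Ny, (j - u).val % 2 = 1 := by
    intro u hu j hj
    have h1 := val_sub_parity hne' j u
    have h2 := hNyeven j hj
    have h3 := hNxodd u hu
    omega
  -- general kill: j ∈ Ny with (j - u).val ≠ n - 3 is not in SS
  have hkillgen : ∀ u ∈ Nx, ∀ j ∈ Ny, (j - u).val ≠ n - 3 → j ∉ SS := by
    intro u hu j hj hne3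
    have he1 := heodd u hu j hj
    have helt : (j - u).val < n := ZMod.val_lt _
    have hje : j ≠ u := by
      intro h; rw [h, sub_self, ZMod.val_zero] at he1; omega
    by_cases hle : (j - u).val + 3 < n
    · have := KXY2 u hu j hj hle ((j - u).val) le_rfl
      rwa [← self_eq_add_natCast_val] at this
    · -- e = n - 1
      have he : (j - u).val = n - 1 := by omega
      have huj : (u - j).val = 1 := by
        have := val_sub_add u j (fun h => hje h.symm)
        omega
      have := KXY1 u hu j hj (by rw [huj]; omega) 0 (by omega)
      rwa [Nat.cast_zero, add_zero] at this
  by_cases hn8 : 8 ≤ n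
  · -- all of Ny is killed
    have hkill : ∀ j ∈ Ny, j ∉ SS := by
      intro j hj
      by_cases h3 : (j - u0).val ≠ n - 3
      · exact hkillgen u0 hu0 j hj h3
      · push_neg at h3
        have huj : (u0 - j).val = 3 := by
          have hje : j ≠ u0 := by
            intro h
            rw [h, sub_self, ZMod.val_zero] at h3
            omega
          have := val_sub_add u0 j (fun h => hje h.symm)
          omega
        have := KXY1 u0 hu0 j hj (by rw [huj]; omega) 0 (by omega)
        rwa [Nat.cast_zero, add_zero] at this
    have hSSsub : SS ⊆ E \ Ny := by
      intro t ht
      exact Finset.mem_sdiff.mpr ⟨hSSE ht, fun hh => hkill t hh ht⟩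
    have hsd := Finset.card_le_card hSSsub
    rw [Finset.card_sdiff_of_subset hNyE, hEcard] at hsd
    have hNx3 : 3 ≤ Nx.card := by omega
    have := NxTwo hn8 Nx hstep
    omega
  · -- n = 6
    have hn6' : n = 6 := by omega
    subst hn6'
    have hcastinj0 : ∀ (u : ZMod 6) (r r' : ℕ), r < 6 → r' < 6 →
        u + (r : ZMod 6) = u + (r' : ZMod 6) → r = r' :=
      fun u r r' hr hr' h => add_natCast_inj u hr hr' h
    have hkill6 : ∀ u ∈ Nx, ∀ j ∈ Ny, j ≠ u + ((3:ℕ) : ZMod 6) → j ∉ SS := by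
      intro u hu j hj hne3
      refine hkillgen u hu j hj ?_
      intro hh
      apply hne3
      have := self_eq_add_natCast_val u j
      rw [hh] at this
      exact this
    by_cases hNx2 : 2 ≤ Nx.card
    · obtain ⟨a, ha, b, hb, hab⟩ := Finset.one_lt_card.mp (show 1 < Nx.card by omega)
      obtain ⟨w, hw, hw2⟩ := pairNx (by omega) Nx ha hb hab hstep
      have hwodd := hNxodd w hw
      have hE6 := evens_zmod6 w hwodd
      have h25 : (w + ((2:ℕ) : ZMod 6)) + ((3:ℕ) : ZMod 6) = w + ((5:ℕ) : ZMod 6) := by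
        push_cast; ring
      have hkillNy : ∀ j ∈ Ny, j ∉ SS := by
        intro j hj
        by_cases h3 : j = w + ((3:ℕ) : ZMod 6)
        · refine hkill6 _ hw2 j hj ?_
          rw [h25, h3]
          intro hh
          have := hcastinj0 w 3 5 (by omega) (by omega) hh
          omega
        · exact hkill6 w hw j hj h3
      have hSSsub : SS ⊆ E \ Ny := by
        intro t ht
        exact Finset.mem_sdiff.mpr ⟨hSSE ht, fun hh => hkillNy t hh ht⟩
      have hsd := Finset.card_le_card hSSsub
      rw [Finset.card_sdiff_of_subset hNyE, hEcard] at hsd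
      have hNx3 : 3 ≤ Nx.card := by omega
      -- Nx = odds, kill all three evens
      have hOcard : (Finset.univ.filter (fun t : ZMod 6 => t.val % 2 = 1)).card = 3 := by
        rw [card_odds 6]
      have hNxO : Nx ⊆ Finset.univ.filter (fun t : ZMod 6 => t.val % 2 = 1) :=
        fun t ht => Finset.mem_filter.mpr ⟨Finset.mem_univ t, hNxodd t ht⟩
      have hNxeq : Nx = Finset.univ.filter (fun t : ZMod 6 => t.val % 2 = 1) :=
        Finset.eq_of_subset_of_card_le hNxO (by omega)
      have hw4 : w + ((4:ℕ) : ZMod 6) ∈ Nx := by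
        rw [hNxeq]
        refine Finset.mem_filter.mpr ⟨Finset.mem_univ _, ?_⟩
        rw [val_add_ofNat_parity hne']
        omega
      have hval26 : ((2:ℕ) : ZMod 6).val = 2 := by decide
      have hdiffval : ∀ r r' : ℕ, r' ≤ r →
          (w + (r : ZMod 6)) - (w + (r' : ZMod 6)) = ((r - r' : ℕ) : ZMod 6) := by
        intro r r' hrr
        rw [Nat.cast_sub hrr]; ring
      -- kill w+1 via (w, w+2)
      have hval2 : ((w + ((2:ℕ) : ZMod 6)) - w).val = 2 := by
        rw [show (w + ((2:ℕ) : ZMod 6)) - w = ((2:ℕ) : ZMod 6) from by ring]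
        exact hval26
      have hwne : w ≠ w + ((2:ℕ) : ZMod 6) := by
        intro h
        have h' : w + ((0:ℕ) : ZMod 6) = w + ((2:ℕ) : ZMod 6) := by
          rw [← h]; simp
        have := hcastinj0 w 0 2 (by omega) (by omega) h'
        omega
      have hk1 := KX w hw _ hw2 hwne (by rw [hval2]; omega) 1 (by rw [hval2]; omega)
      -- kill w+3 via (w+2, w+4)
      have hd42 : ((w + ((4:ℕ) : ZMod 6)) - (w + ((2:ℕ) : ZMod 6))).val = 2 := by
        rw [hdiffval 4 2 (by omega)]
        exact hval26
      have hne24 : w + ((2:ℕ) : ZMod 6) ≠ w + ((4:ℕ) : ZMod 6) := by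
        intro h; have := hcastinj0 w 2 4 (by omega) (by omega) h; omega
      have hk3 := KX _ hw2 _ hw4 hne24 (by rw [hd42]; omega) 1 (by rw [hd42]; omega)
      rw [show (w + ((2:ℕ) : ZMod 6)) + ((1:ℕ) : ZMod 6) = w + ((3:ℕ) : ZMod 6) from by
        push_cast; ring] at hk3
      -- kill w+5 via (w+4, w)
      have hd40 : (w - (w + ((4:ℕ) : ZMod 6))).val = 2 := by
        have : w - (w + ((4:ℕ) : ZMod 6)) = ((2:ℕ) : ZMod 6) := by
          have hc : ((2:ℕ) : ZMod 6) = -((4:ℕ) : ZMod 6) := by decide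
          rw [hc]; ring
        rw [this]; exact hval26
      have hne40 : w + ((4:ℕ) : ZMod 6) ≠ w := by
        intro h
        have h' : w + ((4:ℕ) : ZMod 6) = w + ((0:ℕ) : ZMod 6) := by
          rw [h]; simp
        have := hcastinj0 w 4 0 (by omega) (by omega) h'
        omega
      have hk5 := KX _ hw4 _ hw hne40 (by rw [hd40]; omega) 1 (by rw [hd40]; omega)
      rw [show (w + ((4:ℕ) : ZMod 6)) + ((1:ℕ) : ZMod 6) = w + ((5:ℕ) : ZMod 6) from by
        push_cast; ring] at hk5
      obtain ⟨t0, ht0⟩ := hSSne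
      rcases hE6 t0 (hSSeven t0 ht0) with h | h | h
      · exact hk1 (by rwa [← h])
      · exact hk3 (h ▸ ht0)
      · exact hk5 (h ▸ ht0)
    · -- Nx.card = 1, Ny = E
      have hNyeq : Ny = E := by
        refine Finset.eq_of_subset_of_card_le hNyE ?_
        omega
      have hu0odd := hNxodd u0 hu0
      have hE6 := evens_zmod6 u0 hu0odd
      have h1mem : u0 + ((1:ℕ) : ZMod 6) ∈ Ny := by
        rw [hNyeq]
        exact (hmemE _).mpr (hparx u0 hu0 1 (by omega))
      have h5mem : u0 + ((5:ℕ) : ZMod 6) ∈ Ny := by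
        rw [hNyeq]
        exact (hmemE _).mpr (hparx u0 hu0 5 (by omega))
      have hk1 : u0 + ((1:ℕ) : ZMod 6) ∉ SS := by
        refine hkill6 u0 hu0 _ h1mem ?_
        intro hh
        have := hcastinj0 u0 1 3 (by omega) (by omega) hh
        omega
      have hk5 : u0 + ((5:ℕ) : ZMod 6) ∉ SS := by
        refine hkill6 u0 hu0 _ h5mem ?_
        intro hh
        have := hcastinj0 u0 5 3 (by omega) (by omega) hh
        omega
      have hSSsub : SS ⊆ {u0 + ((3:ℕ) : ZMod 6)} := by
        intro t ht
        rcases hE6 t (hSSeven t ht) with h | h | h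
        · exact absurd (h ▸ ht) hk1
        · exact Finset.mem_singleton.mpr h
        · exact absurd (h ▸ ht) hk5
      have := Finset.card_le_card hSSsub
      rw [Finset.card_singleton] at this
      omega

end Core

/-- Setup: index a cycle by `ZMod n`. -/
lemma cycle_index {V : Type*} [DecidableEq V] {G : SimpleGraph V} {v : V}
    (c : G.Walk v v) (hc : c.IsCycle) {n : ℕ} (hn : n = c.length) (hn6 : 6 ≤ n)
    (s₀ : V) (hs₀ : s₀ ∈ c.support) :
    ∃ p : ZMod n → V, Function.Injective p ∧ (∀ t, G.Adj (p t) (p (t + 1))) ∧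
      (∀ w, w ∈ c.support ↔ ∃ t, w = p t) ∧ p 0 = s₀ := by
  haveI : NeZero n := ⟨by omega⟩
  have hlen : c.support.tail.length = n := by
    rw [List.length_tail, SimpleGraph.Walk.length_support]
    omega
  have hslen : c.support.length = n + 1 := by
    rw [SimpleGraph.Walk.length_support]; omega
  have hnodup : c.support.tail.Nodup := hc.support_nodup
  have hchain := c.isChain_adj_support
  have htlne : c.support.tail ≠ [] := by
    intro h; rw [h] at hlen; simp at hlen; omega
  have hget : ∀ (i : ℕ) (h : i < n),
      c.support.tail.get ⟨i, by rw [hlen]; omega⟩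
        = c.support.get ⟨i + 1, by rw [hslen]; omega⟩ := by
    intro i h
    exact List.get_tail c.support i (by rw [List.length_tail, hslen]; omega)
      (by rw [hslen]; omega)
  have hlast : c.support.tail.get ⟨n - 1, by rw [hlen]; omega⟩ = v := by
    have h1 : c.support.getLast (SimpleGraph.Walk.support_ne_nil c) = v :=
      SimpleGraph.Walk.getLast_support c
    rw [List.getLast_eq_getElem] at h1
    rw [hget (n - 1) (by omega)]
    have h2 : c.support.get ⟨n - 1 + 1, by rw [hslen]; omega⟩
        = c.support[c.support.length - 1] := by
      have e : n - 1 + 1 = c.support.length - 1 := by omega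
      simp only [List.get_eq_getElem]
      congr 1
    rw [h2, h1]
  have hheadv : c.support.get ⟨0, by rw [hslen]; omega⟩ = v := by
    rw [List.get_of_eq (SimpleGraph.Walk.support_eq_cons c)]
    rfl
  have hadj0 : ∀ (i : ℕ) (h : i + 1 < n),
      G.Adj (c.support.tail.get ⟨i, by rw [hlen]; omega⟩)
        (c.support.tail.get ⟨i + 1, by rw [hlen]; omega⟩) := by
    intro i h
    rw [hget i (by omega), hget (i + 1) (by omega)]
    exact List.isChain_iff_getElem.mp hchain (i + 1) (by rw [hslen]; omega)
  have hadjv : G.Adj v (c.support.tail.get ⟨0, by rw [hlen]; omega⟩) := by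
    rw [hget 0 (by omega)]
    have : G.Adj (c.support.get ⟨0, by rw [hslen]; omega⟩) (c.support.get ⟨0 + 1, by rw [hslen]; omega⟩) :=
      List.isChain_iff_getElem.mp hchain 0 (by rw [hslen]; omega)
    rwa [hheadv] at this
  set p1 : ZMod n → V := fun t => c.support.tail.get ⟨t.val, by rw [hlen]; exact ZMod.val_lt t⟩
    with hp1
  have hp1inj : Function.Injective p1 := by
    intro a b hab
    have := List.nodup_iff_injective_get.mp hnodup hab
    have h2 := congrArg Fin.val this
    simp only at h2
    exact ZMod.val_injective n h2
  have hp1adj : ∀ t : ZMod n, G.Adj (p1 t) (p1 (t + 1)) := by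
    intro t
    have hval1 : (1 : ZMod n).val = 1 := by
      have h : ((1:ℕ) : ZMod n).val = 1 := ZMod.val_cast_of_lt (by omega)
      simpa using h
    have hadd : (t + 1).val = (t.val + 1) % n := by
      rw [ZMod.val_add, hval1]
    by_cases hw : t.val + 1 < n
    · have h2 : (t + 1).val = t.val + 1 := by rw [hadd, Nat.mod_eq_of_lt hw]
      have h3 := hadj0 t.val hw
      rw [hp1]
      simp only
      convert h3 using 2
      exact Fin.ext h2
    · have hv : t.val = n - 1 := by
        have := ZMod.val_lt t
        omega
      have h2 : (t + 1).val = 0 := by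
        rw [hadd, hv, show n - 1 + 1 = n from by omega, Nat.mod_self]
      rw [hp1]
      simp only
      have e1 : c.support.tail.get ⟨t.val, by rw [hlen]; exact ZMod.val_lt t⟩ = v := by
        have hfin : (⟨t.val, by rw [hlen]; exact ZMod.val_lt t⟩ : Fin c.support.tail.length)
            = ⟨n - 1, by rw [hlen]; omega⟩ := Fin.ext hv
        rw [hfin]
        exact hlast
      have e2 : c.support.tail.get ⟨(t+1).val, by rw [hlen]; exact ZMod.val_lt _⟩
          = c.support.tail.get ⟨0, by rw [hlen]; omega⟩ := by
        have hfin : (⟨(t+1).val, by rw [hlen]; exact ZMod.val_lt _⟩ : Fin c.support.tail.length)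
            = ⟨0, by rw [hlen]; omega⟩ := Fin.ext h2
        rw [hfin]
      rw [e1, e2]
      exact hadjv
  have hp1range : ∀ w, w ∈ c.support ↔ ∃ t, w = p1 t := by
    intro w
    constructor
    · intro hw
      have hwtl : w ∈ c.support.tail := by
        rw [SimpleGraph.Walk.support_eq_cons c] at hw
        rcases List.mem_cons.mp hw with rfl | h
        · exact List.mem_iff_get.mpr ⟨⟨n - 1, by rw [hlen]; omega⟩, hlast⟩
        · exact h
      obtain ⟨i, hi⟩ := List.mem_iff_get.mp hwtl
      refine ⟨((i : ℕ) : ZMod n), ?_⟩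
      rw [hp1]
      simp only
      rw [← hi]
      congr 1
      have h : (((i : ℕ) : ZMod n)).val = (i : ℕ) :=
        ZMod.val_cast_of_lt (by rw [← hlen]; exact i.2)
      simp [h]
    · rintro ⟨t, rfl⟩
      rw [SimpleGraph.Walk.support_eq_cons c]
      exact List.mem_cons_of_mem v (List.mem_iff_get.mpr ⟨_, rfl⟩)
  have hs₀tl : s₀ ∈ c.support.tail := by
    rw [SimpleGraph.Walk.support_eq_cons c] at hs₀
    rcases List.mem_cons.mp hs₀ with rfl | h
    · exact List.mem_iff_get.mpr ⟨⟨n - 1, by rw [hlen]; omega⟩, hlast⟩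
    · exact h
  obtain ⟨i0, hi0⟩ := List.mem_iff_get.mp hs₀tl
  refine ⟨fun t => p1 (t + ((i0 : ℕ) : ZMod n)), ?_, ?_, ?_, ?_⟩
  · intro a b hab
    have := hp1inj hab
    exact add_right_cancel this
  · intro t
    have h := hp1adj (t + ((i0 : ℕ) : ZMod n))
    have e : t + ((i0 : ℕ) : ZMod n) + 1 = t + 1 + ((i0 : ℕ) : ZMod n) := by ring
    rw [e] at h
    exact h
  · intro w
    rw [hp1range w]
    constructor
    · rintro ⟨t, rfl⟩
      exact ⟨t - ((i0 : ℕ) : ZMod n), by congr 1; ring⟩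
    · rintro ⟨t, rfl⟩
      exact ⟨t + ((i0 : ℕ) : ZMod n), rfl⟩
  · simp only [zero_add]
    rw [hp1]
    simp only
    rw [← hi0]
    congr 1
    have h : (((i0 : ℕ) : ZMod n)).val = (i0 : ℕ) :=
      ZMod.val_cast_of_lt (by rw [← hlen]; exact i0.2)
    simp [h]

end ReroutingAux

open ReroutingAux

/-- Lemma 1(3): for a minimal feasible cycle C of length ≥ 6 and x ∈ S, y ∈ Y
off C with e({x,y}, C) ≥ |C|/2 + 1, we have xy ∉ E and G[V(C) ∪ {x,y}]
contains a cycle C' with |C'| = |C|, |S ∩ V(C')| = |S ∩ V(C)|, together with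
an edge from x to a vertex y_i of C disjoint from C'. -/
theorem rerouting_minimal_cycle {V : Type*} [Fintype V] [DecidableEq V]
    (G : SimpleGraph V) [DecidableRel G.Adj]
    (X Y S : Finset V)
    (hdisj : Disjoint X Y) (hcover : X ∪ Y = Finset.univ)
    (hbip : ∀ u v : V, G.Adj u v → (u ∈ X ∧ v ∈ Y) ∨ (u ∈ Y ∧ v ∈ X))
    (hSX : S ⊆ X)
    (v : V) (c : G.Walk v v) (hc : c.IsCycle)
    (hlen : 6 ≤ c.length)
    (hfeas : 2 ≤ (S ∩ c.support.toFinset).card)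
    (hmin : ∀ (u : V) (c' : G.Walk u u), c'.IsCycle →
      2 ≤ (S ∩ c'.support.toFinset).card → c.length ≤ c'.length)
    (x y : V) (hx : x ∈ S) (hxc : x ∉ c.support)
    (hy : y ∈ Y) (hyc : y ∉ c.support)
    (he : c.length / 2 + 1 ≤
      (c.support.toFinset.filter (fun u => G.Adj x u)).card +
        (c.support.toFinset.filter (fun u => G.Adj y u)).card) :
    ¬ G.Adj x y ∧
    ∃ (u : V) (c' : G.Walk u u), c'.IsCycle ∧
      c'.support.toFinset ⊆ insert x (insert y c.support.toFinset) ∧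
      c'.length = c.length ∧
      (S ∩ c'.support.toFinset).card = (S ∩ c.support.toFinset).card ∧
      ∃ yi ∈ c.support.toFinset, G.Adj x yi ∧
        x ∉ c'.support ∧ yi ∉ c'.support := by
  classical
  set n := c.length with hnc
  have hn6 : 6 ≤ n := hlen
  haveI : NeZero n := ⟨by omega⟩
  have hfne : (S ∩ c.support.toFinset).Nonempty :=
    Finset.card_pos.mp (by omega)
  obtain ⟨s₀, hs₀m⟩ := hfne
  have hs₀S : s₀ ∈ S := (Finset.mem_inter.mp hs₀m).1
  have hs₀c : s₀ ∈ c.support := List.mem_toFinset.mp (Finset.mem_inter.mp hs₀m).2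
  obtain ⟨p, hpinj, hadjp, hrange, hp0⟩ := cycle_index c hc hnc hn6 s₀ hs₀c
  -- bipartition helpers
  have hYnotX : ∀ a, a ∈ Y → a ∉ X := fun a hay hax => Finset.disjoint_left.mp hdisj hax hay
  have hnotXY : ∀ a, a ∉ X → a ∈ Y := by
    intro a ha
    have hu : a ∈ X ∪ Y := hcover ▸ Finset.mem_univ a
    rcases Finset.mem_union.mp hu with h | h
    · exact absurd h ha
    · exact h
  have hadjX : ∀ a b, G.Adj a b → (a ∈ X ↔ b ∉ X) := by
    intro a b hab
    rcases hbip a b hab with ⟨h1, h2⟩ | ⟨h1, h2⟩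
    · exact iff_of_true h1 (hYnotX b h2)
    · exact iff_of_false (hYnotX a h1) (not_not_intro h2)
  have hp0X : p 0 ∈ X := by rw [hp0]; exact hSX hs₀S
  -- parity along the cycle
  have hq : ∀ m : ℕ, (p ((m : ℕ) : ZMod n) ∈ X ↔ m % 2 = 0) := by
    intro m
    induction m with
    | zero =>
      simpa using hp0X
    | succ m ih =>
      have hxiff := hadjX _ _ (hadjp ((m : ℕ) : ZMod n))
      have hcast : ((m : ℕ) : ZMod n) + 1 = (((m + 1 : ℕ)) : ZMod n) := by push_cast; ring
      rw [hcast] at hxiff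
      by_cases hm : m % 2 = 0
      · exact iff_of_false (hxiff.mp (ih.mpr hm)) (by omega)
      · have h1 : p ((m : ℕ) : ZMod n) ∉ X := fun hh => hm (ih.mp hh)
        have h2 : p (((m+1 : ℕ)) : ZMod n) ∈ X := by
          by_contra hh
          exact h1 (hxiff.mpr hh)
        exact iff_of_true h2 (by omega)
  have hnev : n % 2 = 0 := by
    have h1 := hq n
    rw [ZMod.natCast_self] at h1
    exact h1.mp hp0X
  have hneven : Even n := Nat.even_iff.mpr hnev
  have hX : ∀ t : ZMod n, (p t ∈ X ↔ t.val % 2 = 0) := by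
    intro t
    have := hq t.val
    rwa [ZMod.natCast_zmod_val] at this
  have hxnotp : ∀ r, x ≠ p r := fun r h => hxc ((hrange x).mpr ⟨r, h⟩)
  have hynotp : ∀ r, y ≠ p r := fun r h => hyc ((hrange y).mpr ⟨r, h⟩)
  have hxX : x ∈ X := hSX hx
  have hxyne : x ≠ y := fun h => hYnotX y hy (h ▸ hxX)
  -- index finsets
  set NxF := Finset.univ.filter (fun t : ZMod n => G.Adj x (p t)) with hNxF
  set NyF := Finset.univ.filter (fun t : ZMod n => G.Adj y (p t)) with hNyF
  set SSF := Finset.univ.filter (fun t : ZMod n => p t ∈ S) with hSSF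
  have himg : c.support.toFinset = Finset.univ.image p := by
    ext w
    rw [List.mem_toFinset, hrange w]
    simp [eq_comm]
  have hNxcard : (c.support.toFinset.filter (fun u => G.Adj x u)).card = NxF.card := by
    rw [himg, Finset.filter_image, Finset.card_image_of_injective _ hpinj]
  have hNycard : (c.support.toFinset.filter (fun u => G.Adj y u)).card = NyF.card := by
    rw [himg, Finset.filter_image, Finset.card_image_of_injective _ hpinj]
  have hSScard : (S ∩ c.support.toFinset).card = SSF.card := by
    have h1 : S ∩ c.support.toFinset = (Finset.univ.image p).filter (fun w => w ∈ S) := by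
      rw [Finset.filter_mem_eq_inter, Finset.inter_comm, himg]
    rw [h1, Finset.filter_image, Finset.card_image_of_injective _ hpinj]
  have hcard' : n / 2 + 1 ≤ NxF.card + NyF.card := by
    rw [← hNxcard, ← hNycard]
    exact he
  have hSS2' : 2 ≤ SSF.card := by rw [← hSScard]; exact hfeas
  have hNxodd : ∀ t ∈ NxF, t.val % 2 = 1 := by
    intro t ht
    have hadj : G.Adj x (p t) := (Finset.mem_filter.mp ht).2
    have h1 : p t ∉ X := (hadjX x (p t) hadj).mp hxX
    have h2 : ¬ (t.val % 2 = 0) := fun hh => h1 ((hX t).mpr hh)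
    omega
  have hNyev : ∀ t ∈ NyF, t.val % 2 = 0 := by
    intro t ht
    have hadj : G.Adj y (p t) := (Finset.mem_filter.mp ht).2
    rcases hbip y (p t) hadj with ⟨h1, _⟩ | ⟨_, h2⟩
    · exact absurd h1 (hYnotX y hy)
    · exact (hX t).mp h2
  have hSSev : ∀ t ∈ SSF, t.val % 2 = 0 := by
    intro t ht
    exact (hX t).mp (hSX (Finset.mem_filter.mp ht).2)
  -- minimality core
  have hshort : ∀ (a : V) (D : G.Walk a a), D.IsCycle → D.length < n →
      ¬ (2 ≤ (S ∩ D.support.toFinset).card) := by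
    intro a D hD hlt h2
    have := hmin a D hD h2
    omega
  have hpair : ∀ (a b : V) (D : List V), a ∈ D → b ∈ D → a ≠ b → a ∈ S → b ∈ S →
      2 ≤ (S ∩ D.toFinset).card := by
    intro a b D ha hb hab haS hbS
    refine Finset.one_lt_card.mpr ⟨a, ?_, b, ?_, hab⟩
    · exact Finset.mem_inter.mpr ⟨haS, List.mem_toFinset.mpr ha⟩
    · exact Finset.mem_inter.mpr ⟨hbS, List.mem_toFinset.mpr hb⟩
  have hmemSSF : ∀ t : ZMod n, t ∈ SSF ↔ p t ∈ S := by
    intro t; simp [hSSF]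
  -- oracle KX
  have KX : ∀ u ∈ NxF, ∀ w ∈ NxF, u ≠ w → (w - u).val + 2 < n →
      ∀ r ≤ (w - u).val, u + (r : ZMod n) ∉ SSF := by
    intro u hu w hw huw hlt r hr hmem
    have hxu : G.Adj x (p u) := (Finset.mem_filter.mp hu).2
    have hxw : G.Adj x (p w) := (Finset.mem_filter.mp hw).2
    have hprS : p (u + (r : ZMod n)) ∈ S := (hmemSSF _).mp hmem
    obtain ⟨D, hDc, hDlen, hDsup⟩ := build1 p hadjp hpinj x hxnotp u w huw hxu hxw
    refine hshort x D hDc (by omega) ?_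
    exact hpair x (p (u + (r : ZMod n))) D.support ((hDsup x).mpr (Or.inl rfl))
      ((hDsup _).mpr (Or.inr ⟨r, hr, rfl⟩)) (hxnotp _) hx hprS
  -- oracle KY
  have KY : ∀ s' ∈ NyF, ∀ t' ∈ NyF, s' ≠ t' → (t' - s').val + 2 < n →
      ∀ r ≤ (t' - s').val, ∀ r' ≤ (t' - s').val, r ≠ r' →
        ¬(s' + (r : ZMod n) ∈ SSF ∧ s' + (r' : ZMod n) ∈ SSF) := by
    intro s' hs' t' ht' hst hlt r hr r' hr' hrr' hmem
    have hyu : G.Adj y (p s') := (Finset.mem_filter.mp hs').2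
    have hyw : G.Adj y (p t') := (Finset.mem_filter.mp ht').2
    obtain ⟨D, hDc, hDlen, hDsup⟩ := build1 p hadjp hpinj y hynotp s' t' hst hyu hyw
    refine hshort y D hDc (by omega) ?_
    have hvlt : (t' - s').val < n := ZMod.val_lt _
    have hne : p (s' + (r : ZMod n)) ≠ p (s' + (r' : ZMod n)) := by
      intro h
      exact hrr' (add_natCast_inj s' (by omega) (by omega) (hpinj h))
    exact hpair _ _ D.support ((hDsup _).mpr (Or.inr ⟨r, hr, rfl⟩))
      ((hDsup _).mpr (Or.inr ⟨r', hr', rfl⟩)) hne ((hmemSSF _).mp hmem.1)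
      ((hmemSSF _).mp hmem.2)
  -- Part 1 : no edge xy
  have hnoadj : ¬ G.Adj x y := by
    intro hxy
    have KXY1 : ∀ u ∈ NxF, ∀ j ∈ NyF, (u - j).val + 3 < n →
        ∀ r ≤ (u - j).val, j + (r : ZMod n) ∉ SSF := by
      intro u hu j hj hlt r hr hmem
      have hxu : G.Adj x (p u) := (Finset.mem_filter.mp hu).2
      have hyj : G.Adj y (p j) := (Finset.mem_filter.mp hj).2
      have hju : j ≠ u := by
        intro h
        have h1 := hNxodd u hu
        have h2 := hNyev j hj
        rw [h] at h2
        omega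
      obtain ⟨D, hDc, hDlen, hDsup⟩ := build2 p hadjp hpinj x y hxnotp hynotp j u hju
        hxy hyj hxu
      refine hshort x D hDc (by omega) ?_
      exact hpair x (p (j + (r : ZMod n))) D.support ((hDsup x).mpr (Or.inl rfl))
        ((hDsup _).mpr (Or.inr (Or.inr ⟨r, hr, rfl⟩))) (hxnotp _) hx ((hmemSSF _).mp hmem)
    have KXY2 : ∀ u ∈ NxF, ∀ j ∈ NyF, (j - u).val + 3 < n →
        ∀ r ≤ (j - u).val, u + (r : ZMod n) ∉ SSF := by
      intro u hu j hj hlt r hr hmem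
      have hxu : G.Adj x (p u) := (Finset.mem_filter.mp hu).2
      have hyj : G.Adj y (p j) := (Finset.mem_filter.mp hj).2
      have huj : u ≠ j := by
        intro h
        have h1 := hNxodd u hu
        have h2 := hNyev j hj
        rw [h] at h1
        omega
      obtain ⟨D, hDc, hDlen, hDsup⟩ := build2 p hadjp hpinj y x hynotp hxnotp u j huj
        hxy.symm hxu hyj
      refine hshort y D hDc (by omega) ?_
      exact hpair x (p (u + (r : ZMod n))) D.support ((hDsup x).mpr (Or.inr (Or.inl rfl)))
        ((hDsup _).mpr (Or.inr (Or.inr ⟨r, hr, rfl⟩))) (hxnotp _) hx ((hmemSSF _).mp hmem)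
    exact part1core hn6 hneven NxF NyF SSF hNxodd hNyev hSSev hcard' hSS2' KX KXY1 KXY2
  -- Part 2 : construct the rerouted cycle
  obtain ⟨u, huNx, hum, hup⟩ :=
    part2core hn6 hneven NxF NyF SSF hNxodd hNyev hSSev hcard' hSS2' KX KY
  have hyum : G.Adj y (p (u - 1)) := (Finset.mem_filter.mp hum).2
  have hyup : G.Adj y (p (u + 1)) := (Finset.mem_filter.mp hup).2
  have hxu : G.Adj x (p u) := (Finset.mem_filter.mp huNx).2
  have huodd : u.val % 2 = 1 := hNxodd u huNx
  have hst : u + 1 ≠ u - 1 := by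
    intro h
    have h2 : ((2:ℕ) : ZMod n) = 0 := by
      have h3 : (u + 1) - (u - 1) = ((2:ℕ) : ZMod n) := by push_cast; ring
      rw [← h3, h, sub_self]
    have := congrArg ZMod.val h2
    rw [ZMod.val_cast_of_lt (show 2 < n by omega), ZMod.val_zero] at this
    omega
  have hmv : ((u - 1) - (u + 1)).val = n - 2 := by
    have h1 : (u - 1) - (u + 1) = ((n - 2 : ℕ) : ZMod n) := by
      rw [Nat.cast_sub (show 2 ≤ n by omega), ZMod.natCast_self, zero_sub]
      push_cast
      ring
    rw [h1, ZMod.val_cast_of_lt (by omega)]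
  obtain ⟨D, hDc, hDlen, hDsup⟩ := build1 p hadjp hpinj y hynotp (u + 1) (u - 1) hst hyup hyum
  rw [hmv] at hDlen hDsup
  refine ⟨hnoadj, y, D, hDc, ?_, ?_, ?_, p u, ?_, hxu, ?_, ?_⟩
  · -- support subset
    intro w hw
    rcases (hDsup w).mp (List.mem_toFinset.mp hw) with rfl | ⟨r, _, rfl⟩
    · exact Finset.mem_insert_of_mem (Finset.mem_insert_self _ _)
    · exact Finset.mem_insert_of_mem (Finset.mem_insert_of_mem
        (List.mem_toFinset.mpr ((hrange _).mpr ⟨_, rfl⟩)))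
  · rw [hDlen]; omega
  · -- S ∩ supports equal
    have hSeq : S ∩ D.support.toFinset = S ∩ c.support.toFinset := by
      ext w
      simp only [Finset.mem_inter, List.mem_toFinset]
      constructor
      · rintro ⟨hwS, hwD⟩
        refine ⟨hwS, ?_⟩
        rcases (hDsup w).mp hwD with rfl | ⟨r, _, rfl⟩
        · exact absurd (hSX hwS) (hYnotX _ hy)
        · exact (hrange _).mpr ⟨_, rfl⟩
      · rintro ⟨hwS, hwc⟩
        refine ⟨hwS, ?_⟩
        obtain ⟨t, rfl⟩ := (hrange w).mp hwc
        have htev : t.val % 2 = 0 := (hX t).mp (hSX hwS)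
        have hrne : (t - (u + 1)).val ≠ n - 1 := by
          intro hh
          have h1 : t = (u + 1) + (((t - (u+1)).val : ℕ) : ZMod n) :=
            self_eq_add_natCast_val (u + 1) t
          rw [hh] at h1
          have h2 : t = u := by
            rw [h1, Nat.cast_sub (show 1 ≤ n by omega), ZMod.natCast_self, zero_sub]
            push_cast
            ring
          rw [h2] at htev
          omega
        have hrle : (t - (u + 1)).val ≤ n - 2 := by
          have := ZMod.val_lt (t - (u + 1))
          omega
        exact (hDsup _).mpr (Or.inr ⟨(t - (u + 1)).val, hrle,
          congrArg p (self_eq_add_natCast_val (u + 1) t)⟩)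
    rw [hSeq]
  · exact List.mem_toFinset.mpr ((hrange _).mpr ⟨u, rfl⟩)
  · -- x not in D.support
    intro hh
    rcases (hDsup x).mp hh with h | ⟨r, _, h⟩
    · exact hxyne h
    · exact hxnotp _ h
  · -- p u not in D.support
    intro hh
    rcases (hDsup (p u)).mp hh with h | ⟨r, hr, h⟩
    · exact hynotp u h.symm
    · have h1 : u = u + 1 + (r : ZMod n) := hpinj h
      have h2 : ((r + 1 : ℕ) : ZMod n) = 0 := by
        have h3 : (u + 1 + (r : ZMod n)) - u = ((r + 1 : ℕ) : ZMod n) := by push_cast; ring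
        rw [← h3, ← h1, sub_self]
      have h4 := congrArg ZMod.val h2
      rw [ZMod.val_cast_of_lt (show r + 1 < n by omega), ZMod.val_zero] at h4
      omega
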